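/- (Mignotte's bound) If P and Q are nonzero integer polynomials, then h(P) ≤ deg P + h(PQ) + log₂ √(deg(PQ) + 1), where h denotes the height. -/

import Mathlib

open Polynomial Complex Finset

/-! ### The ℓ² norm (squared) of a complex polynomial -/

noncomputable def l2sq (p : ℂ[X]) : ℝ := ∑ i ∈ p.support, Complex.normSq (p.coeff i)

lemma l2sq_eq_sum {p : ℂ[X]} {s : Finset ℕ} (h : p.support ⊆ s) :
    l2sq p = ∑ i ∈ s, Complex.normSq (p.coeff i) :=
  Finset.sum_subset h (fun i _ hi => by
    simp [Polynomial.notMem_support_iff.mp hi])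

lemma normSq_leadingCoeff_le_l2sq (p : ℂ[X]) : Complex.normSq p.leadingCoeff ≤ l2sq p := by
  by_cases hp : p = 0
  · simp [hp, l2sq]
  · exact Finset.single_le_sum (fun i _ => Complex.normSq_nonneg _)
      (Polynomial.natDegree_mem_support_of_nonzero hp)

lemma flip_term (a x y : ℂ) :
    Complex.normSq (x - a * y) - Complex.normSq ((starRingEnd ℂ) a * x - y)
      = (1 - Complex.normSq a) * (Complex.normSq x - Complex.normSq y) := by
  simp only [Complex.normSq_sub, Complex.normSq_mul, Complex.normSq_conj, map_mul,
    Complex.conj_conj]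
  ring_nf

lemma l2sq_flip (a : ℂ) (f : ℂ[X]) :
    l2sq ((X - C a) * f) = l2sq ((C ((starRingEnd ℂ) a) * X - 1) * f) := by
  set n := f.natDegree
  have h1 : ((X - C a) * f).support ⊆ Finset.range (n + 2) := by
    apply (Polynomial.supp_subset_range_natDegree_succ).trans
    apply Finset.range_subset_range.2
    have := Polynomial.natDegree_mul_le (p := X - C a) (q := f)
    have h2 : (X - C a).natDegree ≤ 1 := by
      simp [Polynomial.natDegree_X_sub_C]
    omega
  have h2 : ((C ((starRingEnd ℂ) a) * X - 1) * f).support ⊆ Finset.range (n + 2) := by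
    apply (Polynomial.supp_subset_range_natDegree_succ).trans
    apply Finset.range_subset_range.2
    have := Polynomial.natDegree_mul_le (p := C ((starRingEnd ℂ) a) * X - 1) (q := f)
    have h3 : (C ((starRingEnd ℂ) a) * X - 1).natDegree ≤ 1 := by
      apply (Polynomial.natDegree_sub_le _ _).trans
      simp [Polynomial.natDegree_C_mul_le]
      exact (Polynomial.natDegree_C_mul_le _ _).trans (by simp)
    omega
  have key : ∀ k, ((X - C a) * f).coeff k = (X * f).coeff k - a * f.coeff k := by
    intro k; simp [sub_mul, Polynomial.coeff_sub, Polynomial.coeff_C_mul]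
  have key2 : ∀ k, ((C ((starRingEnd ℂ) a) * X - 1) * f).coeff k
      = (starRingEnd ℂ) a * (X * f).coeff k - f.coeff k := by
    intro k; simp [sub_mul, mul_assoc, Polynomial.coeff_C_mul]
  rw [l2sq_eq_sum h1, l2sq_eq_sum h2]
  simp_rw [key, key2]
  rw [Finset.sum_range_succ' _ (n + 1), Finset.sum_range_succ' _ (n + 1)]
  simp only [Polynomial.coeff_X_mul, Polynomial.mul_coeff_zero, Polynomial.coeff_X_zero,
    zero_mul, zero_sub, mul_zero, Complex.normSq_neg, Complex.normSq_mul]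
  have tele : ∑ i ∈ Finset.range (n + 1),
      (Complex.normSq (f.coeff i) - Complex.normSq (f.coeff (i + 1)))
      = Complex.normSq (f.coeff 0) - Complex.normSq (f.coeff (n + 1)) :=
    Finset.sum_range_sub' _ _
  have hfn : f.coeff (n + 1) = 0 := Polynomial.coeff_natDegree_succ_eq_zero
  have hsub : (∑ i ∈ Finset.range (n + 1), Complex.normSq (f.coeff i - a * f.coeff (i + 1)))
      - ∑ i ∈ Finset.range (n + 1),
        Complex.normSq ((starRingEnd ℂ) a * f.coeff i - f.coeff (i + 1))
      = (1 - Complex.normSq a) * Complex.normSq (f.coeff 0) := by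
    rw [← Finset.sum_sub_distrib]
    simp_rw [flip_term]
    rw [← Finset.mul_sum, tele, hfn]
    simp
  linear_combination hsub

lemma l2sq_flip_prod (S : Multiset ℂ) (f : ℂ[X]) :
    l2sq ((S.map fun a => X - C a).prod * f)
      = l2sq ((S.map fun a => C ((starRingEnd ℂ) a) * X - 1).prod * f) := by
  induction S using Multiset.induction generalizing f with
  | empty => simp
  | cons a S ih =>
    simp only [Multiset.map_cons, Multiset.prod_cons]
    rw [mul_assoc, l2sq_flip, show (C ((starRingEnd ℂ) a) * X - 1) *
        ((S.map fun b => X - C b).prod * f)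
        = (S.map fun b => X - C b).prod * ((C ((starRingEnd ℂ) a) * X - 1) * f) by ring,
      ih, mul_assoc, mul_left_comm]

lemma norm_mprod (s : Multiset ℂ) : ‖s.prod‖ = (s.map fun a => ‖a‖).prod :=
  map_multiset_prod (normHom (α := ℂ)) s

/-! ### The (squared) Mahler measure of a complex polynomial -/

noncomputable def M2 (p : ℂ[X]) : ℝ :=
  Complex.normSq p.leadingCoeff * ((p.roots.map fun a => max 1 (‖a‖)).prod) ^ 2

lemma M2_nonneg (p : ℂ[X]) : 0 ≤ M2 p :=
  mul_nonneg (Complex.normSq_nonneg _) (sq_nonneg _)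

lemma M2_mul (p q : ℂ[X]) (hp : p ≠ 0) (hq : q ≠ 0) : M2 (p * q) = M2 p * M2 q := by
  unfold M2
  rw [Polynomial.roots_mul (mul_ne_zero hp hq), Polynomial.leadingCoeff_mul,
    Complex.normSq_mul, Multiset.map_add, Multiset.prod_add]
  ring

lemma one_le_prod_max (s : Multiset ℂ) : 1 ≤ (s.map fun a => max 1 (‖a‖)).prod :=
  Multiset.one_le_prod (by
    intro x hx
    obtain ⟨a, _, rfl⟩ := Multiset.mem_map.1 hx
    exact le_max_left _ _)

lemma prodB_nonneg (R : Multiset ℂ) : 0 ≤ (R.map fun a => max 1 (‖a‖)).prod :=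
  le_trans zero_le_one (one_le_prod_max R)

lemma leadingCoeff_conj_lin {a : ℂ} (ha : 1 < ‖a‖) :
    (C ((starRingEnd ℂ) a) * X - 1).leadingCoeff = (starRingEnd ℂ) a := by
  have hne : (starRingEnd ℂ) a ≠ 0 := by
    have : a ≠ 0 := by rintro rfl; rw [norm_zero] at ha; linarith
    simpa using this
  rw [sub_eq_add_neg, show (-1 : ℂ[X]) = C (-1) by simp]
  exact Polynomial.leadingCoeff_linear hne

/-- Landau's inequality: the (squared) Mahler measure is at most the (squared) ℓ² norm. -/
lemma M2_le_l2sq (p : ℂ[X]) : M2 p ≤ l2sq p := by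
  classical
  have hsplit : p.Splits := IsAlgClosed.splits p
  set S := p.roots.filter (fun a => 1 < ‖a‖) with hS
  set T := p.roots.filter (fun a => ¬ 1 < ‖a‖) with hT
  have hST : S + T = p.roots := Multiset.filter_add_not _ _
  set g := (S.map fun a => C ((starRingEnd ℂ) a) * X - 1).prod *
      (C p.leadingCoeff * (T.map fun a => X - C a).prod) with hg
  have hl2 : l2sq p = l2sq g := by
    have hpfact : p = (S.map fun a => X - C a).prod *
        (C p.leadingCoeff * (T.map fun a => X - C a).prod) := by
      conv_lhs => rw [hsplit.eq_prod_roots]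
      rw [← hST, Multiset.map_add, Multiset.prod_add]; ring
    rw [hg, ← l2sq_flip_prod]
    conv_lhs => rw [hpfact]
  have hA : ((S.map fun a => C ((starRingEnd ℂ) a) * X - 1).prod).leadingCoeff
      = (S.map fun a => (starRingEnd ℂ) a).prod := by
    have := map_multiset_prod (Polynomial.leadingCoeffHom (R := ℂ))
      (S.map fun a => C ((starRingEnd ℂ) a) * X - 1)
    rw [Polynomial.leadingCoeffHom_apply] at this
    rw [this, Multiset.map_map]
    congr 1
    apply Multiset.map_congr rfl
    intro a ha
    have ha1 : 1 < ‖a‖ := (Multiset.mem_filter.1 ha).2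
    simpa [Polynomial.leadingCoeffHom_apply] using leadingCoeff_conj_lin ha1
  have hB : ((T.map fun a => X - C a).prod).Monic :=
    Polynomial.monic_multiset_prod_of_monic _ _ (fun a _ => Polynomial.monic_X_sub_C a)
  have hlcg : Complex.normSq g.leadingCoeff
      = Complex.normSq ((S.map fun a => (starRingEnd ℂ) a).prod)
        * Complex.normSq p.leadingCoeff := by
    rw [hg, Polynomial.leadingCoeff_mul, Polynomial.leadingCoeff_mul, hA, hB.leadingCoeff,
      Polynomial.leadingCoeff_C, mul_one, Complex.normSq_mul]
  have hprodS : Complex.normSq ((S.map fun a => (starRingEnd ℂ) a).prod)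
      = ((S.map fun a => ‖a‖).prod) ^ 2 := by
    rw [Complex.normSq_eq_norm_sq, norm_mprod, Multiset.map_map]
    congr 2
    apply Multiset.map_congr rfl
    intro a _
    simp [Complex.norm_conj]
  have hM2 : M2 p = Complex.normSq p.leadingCoeff
      * ((S.map fun a => ‖a‖).prod) ^ 2 := by
    unfold M2
    rw [← hST, Multiset.map_add, Multiset.prod_add]
    have h1 : (S.map fun a => max 1 (‖a‖)) = S.map fun a => ‖a‖ := by
      apply Multiset.map_congr rfl
      intro a ha
      exact max_eq_right (Multiset.mem_filter.1 ha).2.le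
    have h2 : ((T.map fun a => max 1 (‖a‖)).prod) = 1 := by
      apply Multiset.prod_eq_one
      intro x hx
      obtain ⟨a, ha, rfl⟩ := Multiset.mem_map.1 hx
      exact max_eq_left (not_lt.1 (Multiset.mem_filter.1 ha).2)
    rw [h1, h2, mul_one]
  calc M2 p = Complex.normSq g.leadingCoeff := by rw [hM2, hlcg, hprodS]; ring
    _ ≤ l2sq g := normSq_leadingCoeff_le_l2sq g
    _ = l2sq p := hl2.symm

/-! ### Coefficient bound via Vieta -/

lemma prod_abs_le {R s : Multiset ℂ} (hs : s ≤ R) :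
    ‖s.prod‖ ≤ (R.map fun a => max 1 (‖a‖)).prod := by
  have h1 : ‖s.prod‖ = (s.map fun a => ‖a‖).prod := by
    rw [norm_mprod]
  have h2 : (s.map fun a => ‖a‖).prod ≤ (s.map fun a => max 1 (‖a‖)).prod :=
    Multiset.prod_map_le_prod_map₀ _ _ (fun i _ => norm_nonneg i)
      (fun i _ => le_max_right _ _)
  have h3 : (s.map fun a => max 1 (‖a‖)).prod
      ≤ (R.map fun a => max 1 (‖a‖)).prod := by
    have hR : R - s + s = R := tsub_add_cancel_of_le hs
    calc (s.map fun a => max 1 (‖a‖)).prod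
        ≤ ((R - s).map fun a => max 1 (‖a‖)).prod
          * (s.map fun a => max 1 (‖a‖)).prod :=
          le_mul_of_one_le_left (prodB_nonneg s) (one_le_prod_max _)
      _ = (R.map fun a => max 1 (‖a‖)).prod := by
          rw [← Multiset.prod_add, ← Multiset.map_add, hR]
  rw [h1]; exact h2.trans h3

lemma abs_esymm_le (R : Multiset ℂ) (m : ℕ) :
    ‖R.esymm m‖ ≤ (Multiset.card R).choose m
      * (R.map fun a => max 1 (‖a‖)).prod := by
  unfold Multiset.esymm
  calc ‖((R.powersetCard m).map Multiset.prod).sum‖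
      ≤ (((R.powersetCard m).map Multiset.prod).map (‖·‖)).sum := by
        simpa using norm_multiset_sum_le ((R.powersetCard m).map Multiset.prod)
    _ ≤ Multiset.card (((R.powersetCard m).map Multiset.prod).map (‖·‖))
        • ((R.map fun a => max 1 (‖a‖)).prod) := by
        apply Multiset.sum_le_card_nsmul
        intro x hx
        simp only [Multiset.map_map, Multiset.mem_map, Function.comp] at hx
        obtain ⟨s, hs, rfl⟩ := hx
        exact prod_abs_le (Multiset.mem_powersetCard.1 hs).1
    _ = (Multiset.card R).choose m * (R.map fun a => max 1 (‖a‖)).prod := by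
        rw [Multiset.card_map, Multiset.card_map, Multiset.card_powersetCard,
          nsmul_eq_mul]

lemma choose_le_two_pow (d m : ℕ) : d.choose m ≤ 2 ^ d := by
  rcases le_or_gt m d with h | h
  · calc d.choose m ≤ ∑ i ∈ Finset.range (d + 1), d.choose i :=
        Finset.single_le_sum (fun i _ => Nat.zero_le _)
          (Finset.mem_range.2 (Nat.lt_succ_of_le h))
      _ = 2 ^ d := Nat.sum_range_choose d
  · rw [Nat.choose_eq_zero_of_lt h]; exact Nat.zero_le _

lemma normSq_coeff_le (p : ℂ[X]) (j : ℕ) :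
    Complex.normSq (p.coeff j) ≤ 4 ^ p.natDegree * M2 p := by
  have hM2 : 0 ≤ M2 p := M2_nonneg p
  rcases le_or_gt j p.natDegree with hj | hj
  · have hcard : Multiset.card p.roots = p.natDegree :=
      Polynomial.splits_iff_card_roots.1 (IsAlgClosed.splits p)
    rw [Polynomial.coeff_eq_esymm_roots_of_card hcard hj]
    set d := p.natDegree
    set B := (p.roots.map fun a => max 1 (‖a‖)).prod with hB
    have hBnn : 0 ≤ B := prodB_nonneg _
    have h1 : ‖p.leadingCoeff * (-1) ^ (d - j) * p.roots.esymm (d - j)‖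
        ≤ ‖p.leadingCoeff‖ * (2 ^ d * B) := by
      rw [norm_mul, norm_mul, norm_pow, norm_neg, norm_one, one_pow, mul_one]
      apply mul_le_mul_of_nonneg_left _ (norm_nonneg _)
      calc ‖p.roots.esymm (d - j)‖
          ≤ (Multiset.card p.roots).choose (d - j) * B := abs_esymm_le _ _
        _ ≤ (2 : ℝ) ^ d * B := by
            apply mul_le_mul_of_nonneg_right _ hBnn
            rw [hcard]
            exact_mod_cast choose_le_two_pow d (d - j)
    have h2 := mul_self_le_mul_self (norm_nonneg _) h1
    rw [← sq, ← Complex.normSq_eq_norm_sq] at h2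
    calc Complex.normSq (p.leadingCoeff * (-1) ^ (d - j) * p.roots.esymm (d - j))
        ≤ (‖p.leadingCoeff‖ * (2 ^ d * B))
          * (‖p.leadingCoeff‖ * (2 ^ d * B)) := h2
      _ = 4 ^ d * (Complex.normSq p.leadingCoeff * B ^ 2) := by
          rw [Complex.normSq_eq_norm_sq, show (4:ℝ)^d = 2^d * 2^d by rw [← mul_pow]; norm_num]
          ring
      _ = 4 ^ d * M2 p := rfl
  · rw [Polynomial.coeff_eq_zero_of_natDegree_lt hj, map_zero]
    positivity

/-! ### The height on ℤ[X], and glue -/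

noncomputable def polyHeight (P : Polynomial ℤ) : ℝ :=
  max 0 (Real.logb 2 ((P.support.sup fun i => (P.coeff i).natAbs : ℕ) : ℝ))

namespace MignotteAux

/-- The (natural-number) height of an integer polynomial. -/
def HN (P : Polynomial ℤ) : ℕ := P.support.sup fun i => (P.coeff i).natAbs

lemma natAbs_coeff_le (P : Polynomial ℤ) (j : ℕ) : (P.coeff j).natAbs ≤ HN P := by
  by_cases hj : j ∈ P.support
  · exact Finset.le_sup (f := fun i => (P.coeff i).natAbs) hj
  · rw [Polynomial.notMem_support_iff.mp hj]; simp

lemma one_le_HN {P : Polynomial ℤ} (hP : P ≠ 0) : 1 ≤ HN P := by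
  obtain ⟨j, hj⟩ := Polynomial.support_nonempty.2 hP
  have h1 : P.coeff j ≠ 0 := Polynomial.mem_support_iff.1 hj
  have h2 : 1 ≤ (P.coeff j).natAbs := Int.natAbs_pos.2 h1
  exact h2.trans (natAbs_coeff_le P j)

/-- Complexification. -/
noncomputable def cx (P : Polynomial ℤ) : ℂ[X] := P.map (Int.castRingHom ℂ)

lemma cx_ne_zero {P : Polynomial ℤ} (hP : P ≠ 0) : cx P ≠ 0 :=
  (Polynomial.map_ne_zero_iff (f := Int.castRingHom ℂ) Int.cast_injective).2 hP

lemma cx_natDegree (P : Polynomial ℤ) : (cx P).natDegree = P.natDegree :=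
  Polynomial.natDegree_map_eq_of_injective Int.cast_injective P

lemma cx_coeff (P : Polynomial ℤ) (j : ℕ) : (cx P).coeff j = ((P.coeff j : ℤ) : ℂ) :=
  Polynomial.coeff_map _ _

lemma normSq_int (m : ℤ) : Complex.normSq ((m : ℤ) : ℂ) = ((m.natAbs : ℝ)) ^ 2 := by
  have h : ((m : ℤ) : ℂ) = (((m : ℝ)) : ℂ) := by push_cast; ring
  rw [h, Complex.normSq_ofReal, Nat.cast_natAbs]
  push_cast [Int.cast_abs]
  rw [_root_.sq_abs]
  ring

lemma one_le_M2_cx {Q : Polynomial ℤ} (hQ : Q ≠ 0) : 1 ≤ M2 (cx Q) := by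
  have h1 : 1 ≤ Complex.normSq (cx Q).leadingCoeff := by
    have hlc : (cx Q).leadingCoeff = ((Q.leadingCoeff : ℤ) : ℂ) := by
      rw [Polynomial.leadingCoeff, cx_natDegree, cx_coeff]; rfl
    rw [hlc, normSq_int]
    have : 1 ≤ Q.leadingCoeff.natAbs :=
      Int.natAbs_pos.2 (Polynomial.leadingCoeff_ne_zero.2 hQ)
    have : (1 : ℝ) ≤ (Q.leadingCoeff.natAbs : ℝ) := by exact_mod_cast this
    nlinarith
  have h2 : 1 ≤ ((((cx Q).roots.map fun a => max 1 (‖a‖)).prod)) ^ 2 := by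
    have := one_le_prod_max ((cx Q).roots)
    nlinarith
  unfold M2
  nlinarith

lemma l2sq_le (R : Polynomial ℤ) :
    l2sq (cx R) ≤ ((R.natDegree : ℝ) + 1) * (HN R : ℝ) ^ 2 := by
  have hcard : ((cx R).support.card : ℝ) ≤ (R.natDegree : ℝ) + 1 := by
    have h1 : (cx R).support.card ≤ (cx R).natDegree + 1 := by
      have := Finset.card_le_card (Polynomial.supp_subset_range_natDegree_succ (p := cx R))
      simpa using this
    rw [cx_natDegree] at h1
    exact_mod_cast h1
  have hterm : ∀ i ∈ (cx R).support, Complex.normSq ((cx R).coeff i) ≤ (HN R : ℝ) ^ 2 := by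
    intro i _
    rw [cx_coeff, normSq_int]
    have := natAbs_coeff_le R i
    have h : ((R.coeff i).natAbs : ℝ) ≤ (HN R : ℝ) := by exact_mod_cast this
    have h0 : (0:ℝ) ≤ ((R.coeff i).natAbs : ℝ) := by positivity
    nlinarith
  calc l2sq (cx R) ≤ (cx R).support.card • ((HN R : ℝ) ^ 2) :=
      Finset.sum_le_card_nsmul _ _ _ hterm
    _ = ((cx R).support.card : ℝ) * (HN R : ℝ) ^ 2 := by rw [nsmul_eq_mul]
    _ ≤ ((R.natDegree : ℝ) + 1) * (HN R : ℝ) ^ 2 := by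
        apply mul_le_mul_of_nonneg_right hcard (by positivity)

/-- The core quantitative inequality. -/
lemma key_sq (P Q : Polynomial ℤ) (hP : P ≠ 0) (hQ : Q ≠ 0) :
    (HN P : ℝ) ^ 2 ≤ 4 ^ P.natDegree * ((((P * Q).natDegree : ℝ) + 1)
      * (HN (P * Q) : ℝ) ^ 2) := by
  obtain ⟨j, _, hj⟩ := Finset.exists_mem_eq_sup P.support
    (Polynomial.support_nonempty.2 hP) (fun i => (P.coeff i).natAbs)
  have h0 : (HN P : ℝ) ^ 2 = Complex.normSq ((cx P).coeff j) := by
    rw [cx_coeff, normSq_int, HN, hj]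
  rw [h0]
  calc Complex.normSq ((cx P).coeff j)
      ≤ 4 ^ (cx P).natDegree * M2 (cx P) := normSq_coeff_le _ _
    _ ≤ 4 ^ P.natDegree * (M2 (cx P) * M2 (cx Q)) := by
        rw [cx_natDegree]
        apply mul_le_mul_of_nonneg_left _ (by positivity)
        exact le_mul_of_one_le_right (M2_nonneg _) (one_le_M2_cx hQ)
    _ = 4 ^ P.natDegree * M2 (cx (P * Q)) := by
        rw [← M2_mul _ _ (cx_ne_zero hP) (cx_ne_zero hQ)]
        congr 1
        unfold cx
        rw [Polynomial.map_mul]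
    _ ≤ 4 ^ P.natDegree * l2sq (cx (P * Q)) := by
        apply mul_le_mul_of_nonneg_left (M2_le_l2sq _) (by positivity)
    _ ≤ 4 ^ P.natDegree * ((((P * Q).natDegree : ℝ) + 1) * (HN (P * Q) : ℝ) ^ 2) := by
        apply mul_le_mul_of_nonneg_left (l2sq_le _) (by positivity)

end MignotteAux

/-- Mignotte's bound: for nonzero integer polynomials `P` and `Q`,
`h(P) ≤ deg P + h(PQ) + log₂ √(deg(PQ) + 1)`. -/
theorem mignotte_bound (P Q : Polynomial ℤ) (hP : P ≠ 0) (hQ : Q ≠ 0) :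
    polyHeight P ≤ (P.natDegree : ℝ) + polyHeight (P * Q) +
      Real.logb 2 (Real.sqrt (((P * Q).natDegree : ℝ) + 1)) := by
  have hPQ : P * Q ≠ 0 := mul_ne_zero hP hQ
  set A : ℝ := (MignotteAux.HN P : ℝ) with hA
  set B : ℝ := (MignotteAux.HN (P * Q) : ℝ) with hB
  set n : ℝ := ((P * Q).natDegree : ℝ) with hn
  set d : ℕ := P.natDegree with hd
  have hA1 : (1 : ℝ) ≤ A := by rw [hA]; exact_mod_cast MignotteAux.one_le_HN hP
  have hB1 : (1 : ℝ) ≤ B := by rw [hB]; exact_mod_cast MignotteAux.one_le_HN hPQ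
  have hn0 : (0 : ℝ) ≤ n := by positivity
  have hs1 : (1 : ℝ) ≤ Real.sqrt (n + 1) := by
    have h := Real.sqrt_le_sqrt (show (1:ℝ) ≤ n + 1 by linarith)
    rwa [Real.sqrt_one] at h
  -- the key real inequality
  have hkey : A ≤ 2 ^ d * Real.sqrt (n + 1) * B := by
    have h2 : A ^ 2 ≤ (2 ^ d * Real.sqrt (n + 1) * B) ^ 2 := by
      have := MignotteAux.key_sq P Q hP hQ
      calc A ^ 2 ≤ 4 ^ d * ((n + 1) * B ^ 2) := this
        _ = (2 ^ d * Real.sqrt (n + 1) * B) ^ 2 := by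
            rw [mul_pow, mul_pow, Real.sq_sqrt (by linarith),
              show ((2:ℝ) ^ d) ^ 2 = 4 ^ d by
                rw [← pow_mul, show (4:ℝ) = 2^2 by norm_num, ← pow_mul]; ring_nf]
            ring
    have hb0 : (0 : ℝ) ≤ 2 ^ d * Real.sqrt (n + 1) * B := by positivity
    calc A = Real.sqrt (A ^ 2) := (Real.sqrt_sq (by linarith)).symm
      _ ≤ Real.sqrt ((2 ^ d * Real.sqrt (n + 1) * B) ^ 2) := Real.sqrt_le_sqrt h2
      _ = 2 ^ d * Real.sqrt (n + 1) * B := Real.sqrt_sq hb0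
  -- now pass to logs
  have hgoal : Real.logb 2 A ≤ (d : ℝ) + Real.logb 2 B + Real.logb 2 (Real.sqrt (n + 1)) := by
    have hlog := Real.logb_le_logb_of_le (b := 2) (by norm_num) (show (0:ℝ) < A by linarith) hkey
    calc Real.logb 2 A ≤ Real.logb 2 (2 ^ d * Real.sqrt (n + 1) * B) := hlog
      _ = Real.logb 2 ((2:ℝ) ^ d) + Real.logb 2 (Real.sqrt (n + 1)) + Real.logb 2 B := by
          rw [Real.logb_mul (by positivity) (by linarith),
            Real.logb_mul (by positivity) (by linarith)]
      _ = (d : ℝ) + Real.logb 2 B + Real.logb 2 (Real.sqrt (n + 1)) := by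
          rw [Real.logb_pow, Real.logb_self_eq_one (by norm_num)]
          ring
  have hmaxA : polyHeight P = Real.logb 2 A := by
    unfold polyHeight
    exact max_eq_right (Real.logb_nonneg (by norm_num) hA1)
  have hmaxB : Real.logb 2 B ≤ polyHeight (P * Q) := le_max_right _ _
  rw [hmaxA]
  calc Real.logb 2 A ≤ (d : ℝ) + Real.logb 2 B + Real.logb 2 (Real.sqrt (n + 1)) := hgoal
    _ ≤ (d : ℝ) + polyHeight (P * Q) + Real.logb 2 (Real.sqrt (n + 1)) := by linarith
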